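/- Let V be a symmetric positive definite real d×d matrix, θ̂ ∈ ℝ^d, β ≥ 0, and B := {θ ∈ ℝ^d : ‖θ̂ − θ‖_V ≤ β}. Let α ∈ (0,1] and 0 < r_l ≤ r_b, and suppose θ* ∈ B, ψ*, ψ̄ ∈ ℝ^d with ‖ψ̄‖₂ ≤ 1, (ψ*)ᵀθ* ≥ r_b, ψ̄ᵀθ* < (1 − α)·r_b, and λ_min(V) > (2(2 − α)β/(α r_l))². Then sup_{θ ∈ B} (ψ*)ᵀθ > sup_{θ ∈ B} ψ̄ᵀθ. -/

import Mathlib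

open Matrix

open scoped Classical in
/-- smallest eigenvalue of a real matrix (junk value 0 if not Hermitian) -/
noncomputable def lamMin {d : ℕ} (V : Matrix (Fin d) (Fin d) ℝ) : ℝ :=
  if h : V.IsHermitian then ⨅ i, h.eigenvalues i else 0

open scoped Classical in
/-- largest eigenvalue of a real matrix (junk value 0 if not Hermitian) -/
noncomputable def lamMax {d : ℕ} (V : Matrix (Fin d) (Fin d) ℝ) : ℝ :=
  if h : V.IsHermitian then ⨆ i, h.eigenvalues i else 0

/-- weighted norm ‖z‖_V = √(zᵀ V z) -/
noncomputable def wnorm {d : ℕ} (V : Matrix (Fin d) (Fin d) ℝ) (z : Fin d → ℝ) : ℝ :=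
  Real.sqrt (z ⬝ᵥ V.mulVec z)

/-- Euclidean norm of a vector in ℝ^d -/
noncomputable def eucNorm {d : ℕ} (z : Fin d → ℝ) : ℝ :=
  Real.sqrt (z ⬝ᵥ z)

lemma lamMin_le' {d : ℕ} {V : Matrix (Fin d) (Fin d) ℝ} (hH : V.IsHermitian) (i : Fin d) :
    lamMin V ≤ hH.eigenvalues i := by
  rw [lamMin, dif_pos hH]
  exact ciInf_le (Finite.bddBelow_range _) i

lemma quad_ge' {d : ℕ} {V : Matrix (Fin d) (Fin d) ℝ} (hH : V.IsHermitian) (z : Fin d → ℝ) :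
    lamMin V * (z ⬝ᵥ z) ≤ z ⬝ᵥ V.mulVec z := by
  set U : Matrix (Fin d) (Fin d) ℝ := (hH.eigenvectorUnitary : Matrix (Fin d) (Fin d) ℝ) with hU
  set w : Fin d → ℝ := (star U).mulVec z with hw
  have hzU : z ᵥ* U = w := by
    ext i; simp [hw, vecMul, mulVec, dotProduct, mul_comm]
  have hUU : U * star U = 1 := hH.eigenvectorUnitary.prop.2
  have hzz : z ⬝ᵥ z = w ⬝ᵥ w := by
    calc z ⬝ᵥ z = z ⬝ᵥ (U * star U).mulVec z := by rw [hUU, one_mulVec]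
    _ = z ⬝ᵥ U.mulVec ((star U).mulVec z) := by rw [mulVec_mulVec]
    _ = (z ᵥ* U) ⬝ᵥ w := by rw [dotProduct_mulVec, hw]
    _ = w ⬝ᵥ w := by rw [hzU]
  have hquad : z ⬝ᵥ V.mulVec z = ∑ i, hH.eigenvalues i * (w i * w i) := by
    calc z ⬝ᵥ V.mulVec z
        = z ⬝ᵥ (U * diagonal (RCLike.ofReal ∘ hH.eigenvalues) * star U).mulVec z := by
          conv_lhs => rw [hH.spectral_theorem, Unitary.conjStarAlgAut_apply]
    _ = (z ᵥ* U) ⬝ᵥ (diagonal (RCLike.ofReal ∘ hH.eigenvalues)).mulVec ((star U).mulVec z) := by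
          rw [← mulVec_mulVec, ← mulVec_mulVec, dotProduct_mulVec z U]
    _ = ∑ i, hH.eigenvalues i * (w i * w i) := by
          rw [hzU, ← hw]
          simp [dotProduct, mulVec_diagonal]
          exact Finset.sum_congr rfl fun i _ => by ring
  rw [hquad, hzz, dotProduct, Finset.mul_sum]
  apply Finset.sum_le_sum
  intro i _
  exact mul_le_mul_of_nonneg_right (lamMin_le' hH i) (mul_self_nonneg _)

lemma eucNorm_eq' {d : ℕ} (z : Fin d → ℝ) :
    eucNorm z = ‖(EuclideanSpace.equiv (Fin d) ℝ).symm z‖ := by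
  rw [eucNorm, EuclideanSpace.norm_eq]
  congr 1
  simp [dotProduct, Real.norm_eq_abs, sq_abs, pow_two]

lemma dot_eq_inner' {d : ℕ} (x y : Fin d → ℝ) :
    x ⬝ᵥ y = inner ℝ ((EuclideanSpace.equiv (Fin d) ℝ).symm x)
      ((EuclideanSpace.equiv (Fin d) ℝ).symm y) := by
  rw [PiLp.inner_apply]
  simp [dotProduct, mul_comm]

lemma dot_le' {d : ℕ} (x y : Fin d → ℝ) : x ⬝ᵥ y ≤ eucNorm x * eucNorm y := by
  rw [dot_eq_inner', eucNorm_eq', eucNorm_eq']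
  exact real_inner_le_norm _ _

lemma eucNorm_tri' {d : ℕ} (x y : Fin d → ℝ) : eucNorm (x + y) ≤ eucNorm x + eucNorm y := by
  rw [eucNorm_eq', eucNorm_eq', eucNorm_eq']
  simp only [map_add]
  exact norm_add_le _ _

lemma eucNorm_nonneg' {d : ℕ} (z : Fin d → ℝ) : 0 ≤ eucNorm z := Real.sqrt_nonneg _

lemma eucNorm_neg' {d : ℕ} (z : Fin d → ℝ) : eucNorm (-z) = eucNorm z := by
  simp [eucNorm, dotProduct]

theorem stmt16 {d : ℕ} (V : Matrix (Fin d) (Fin d) ℝ) (hV : V.PosDef)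
    (θhat : Fin d → ℝ) (β : ℝ) (hβ : 0 ≤ β)
    (B : Set (Fin d → ℝ)) (hB : B = {θ : Fin d → ℝ | wnorm V (θhat - θ) ≤ β})
    (α rl rb : ℝ) (hα0 : 0 < α) (hα1 : α ≤ 1) (hrl : 0 < rl) (hlb : rl ≤ rb)
    (θstar ψstar ψbar : Fin d → ℝ) (hθB : θstar ∈ B)
    (hψbar : eucNorm ψbar ≤ 1)
    (h1 : ψstar ⬝ᵥ θstar ≥ rb)
    (h2 : ψbar ⬝ᵥ θstar < (1 - α) * rb)
    (hlmin : lamMin V > (2 * (2 - α) * β / (α * rl)) ^ 2) :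
    (⨆ θ : B, ψstar ⬝ᵥ (θ : Fin d → ℝ)) > ⨆ θ : B, ψbar ⬝ᵥ (θ : Fin d → ℝ) := by
  have hH := hV.isHermitian
  have hrb : 0 < rb := lt_of_lt_of_le hrl hlb
  set q : ℝ := 2 * (2 - α) * β / (α * rl) with hq
  have hαrl : 0 < α * rl := mul_pos hα0 hrl
  have hq0 : 0 ≤ q := by
    apply div_nonneg _ hαrl.le
    nlinarith
  have hlm0 : 0 < lamMin V := lt_of_le_of_lt (sq_nonneg q) hlmin
  set s := Real.sqrt (lamMin V) with hs
  have hs0 : 0 < s := Real.sqrt_pos.mpr hlm0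
  have hs2 : s ^ 2 = lamMin V := Real.sq_sqrt hlm0.le
  have hqs : q < s := by
    rw [hs, show q = Real.sqrt (q ^ 2) from (Real.sqrt_sq hq0).symm]
    exact Real.sqrt_lt_sqrt (sq_nonneg q) hlmin
  have hql : q * (α * rl) = 2 * (2 - α) * β := by
    rw [hq]; exact div_mul_cancel₀ _ hαrl.ne'
  have hkey : 2 * β < s * (α * rb) := by
    nlinarith [mul_pos (sub_pos.mpr hqs) hαrl,
      mul_nonneg (mul_nonneg hs0.le hα0.le) (sub_nonneg.mpr hlb),
      mul_nonneg hβ (sub_nonneg.mpr hα1)]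
  -- distance bound for elements of B
  have hdist : ∀ θ ∈ B, eucNorm (θhat - θ) ≤ β / s := by
    intro θ hθ
    rw [hB] at hθ
    simp only [Set.mem_setOf_eq, wnorm] at hθ
    set z := θhat - θ with hz
    have hzz0 : 0 ≤ z ⬝ᵥ z := Finset.sum_nonneg fun i _ => mul_self_nonneg _
    have hq4 := quad_ge' hH z
    have h0 : 0 ≤ z ⬝ᵥ V.mulVec z := le_trans (by positivity) hq4
    have hzV : z ⬝ᵥ V.mulVec z ≤ β ^ 2 := by
      nlinarith [Real.sq_sqrt h0, Real.sqrt_nonneg (z ⬝ᵥ V.mulVec z)]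
    have h3 : z ⬝ᵥ z ≤ (β / s) ^ 2 := by
      rw [div_pow, hs2, le_div_iff₀ hlm0]
      nlinarith
    calc eucNorm z = Real.sqrt (z ⬝ᵥ z) := rfl
      _ ≤ Real.sqrt ((β / s) ^ 2) := Real.sqrt_le_sqrt h3
      _ = β / s := Real.sqrt_sq (by positivity)
  -- linear functional bound on B
  have hbound : ∀ ψ : Fin d → ℝ, ∀ θ ∈ B, ψ ⬝ᵥ θ ≤ ψ ⬝ᵥ θstar + eucNorm ψ * (2 * β / s) := by
    intro ψ θ hθ
    have h6 : eucNorm (θ - θstar) ≤ 2 * β / s := by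
      have hsplit : θ - θstar = -(θhat - θ) + (θhat - θstar) := by abel
      calc eucNorm (θ - θstar) = eucNorm (-(θhat - θ) + (θhat - θstar)) := by rw [hsplit]
        _ ≤ eucNorm (-(θhat - θ)) + eucNorm (θhat - θstar) := eucNorm_tri' _ _
        _ = eucNorm (θhat - θ) + eucNorm (θhat - θstar) := by rw [eucNorm_neg']
        _ ≤ β / s + β / s := add_le_add (hdist θ hθ) (hdist θstar hθB)
        _ = 2 * β / s := by ring
    have h7 := dot_le' ψ (θ - θstar)
    have h5 : ψ ⬝ᵥ (θ - θstar) = ψ ⬝ᵥ θ - ψ ⬝ᵥ θstar := dotProduct_sub ψ θ θstar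
    nlinarith [mul_le_mul_of_nonneg_left h6 (eucNorm_nonneg' ψ)]
  have hBne : B.Nonempty := ⟨θstar, hθB⟩
  haveI : Nonempty B := hBne.to_subtype
  have hbdd : ∀ ψ : Fin d → ℝ, BddAbove (Set.range fun θ : B => ψ ⬝ᵥ (θ : Fin d → ℝ)) := by
    intro ψ
    refine ⟨ψ ⬝ᵥ θstar + eucNorm ψ * (2 * β / s), ?_⟩
    rintro x ⟨θ, rfl⟩
    exact hbound ψ θ θ.2
  have hsup_bar : (⨆ θ : B, ψbar ⬝ᵥ (θ : Fin d → ℝ)) ≤ ψbar ⬝ᵥ θstar + 2 * β / s := by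
    apply ciSup_le
    intro θ
    have hb := hbound ψbar θ θ.2
    have h8 : eucNorm ψbar * (2 * β / s) ≤ 1 * (2 * β / s) :=
      mul_le_mul_of_nonneg_right hψbar (by positivity)
    linarith
  have hsup_star : rb ≤ ⨆ θ : B, ψstar ⬝ᵥ (θ : Fin d → ℝ) :=
    le_trans h1 (le_ciSup (hbdd ψstar) ⟨θstar, hθB⟩)
  have hdiv : 2 * β / s < α * rb := by
    rw [div_lt_iff₀ hs0]
    calc 2 * β < s * (α * rb) := hkey
      _ = α * rb * s := by ring
  calc (⨆ θ : B, ψbar ⬝ᵥ (θ : Fin d → ℝ)) ≤ ψbar ⬝ᵥ θstar + 2 * β / s := hsup_bar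
    _ < (1 - α) * rb + α * rb := by linarith
    _ = rb := by ring
    _ ≤ ⨆ θ : B, ψstar ⬝ᵥ (θ : Fin d → ℝ) := hsup_star
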